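/- The clobber position oxo (path o-x-o) is equivalent to the clobber position ox (path o-x), which is the game * = {0 | 0}. -/

import Mathlib

universe u

namespace SetTheory

/-- Pre-games (Conway), as in the older Mathlib's `SetTheory.PGame`, which is no longer in Mathlib. -/
inductive PGame : Type (u + 1)
  | mk : ∀ α β : Type u, (α → PGame) → (β → PGame) → PGame

namespace PGame

/-- `(leAux x y).1` is `x ≤ y` and `(leAux x y).2` is `y ≤ x` (Conway's order). -/
noncomputable def leAux (x : PGame.{u}) : PGame.{u} → Prop × Prop :=
  PGame.rec (motive := fun _ => PGame.{u} → Prop × Prop)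
    (fun _ _ _ _ IHL IHR y =>
      PGame.rec (motive := fun _ => Prop × Prop)
        (fun yl yr yL yR JL JR =>
          ((∀ i, ¬ (IHL i (mk yl yr yL yR)).2) ∧ (∀ j, ¬ (JR j).2),
           (∀ i, ¬ (JL i).1) ∧ (∀ j, ¬ (IHR j (mk yl yr yL yR)).1))) y) x

instance : LE PGame.{u} := ⟨fun x y => (leAux x y).1⟩

/-- Two pre-games are equivalent if each is `≤` the other. -/
def Equiv (x y : PGame.{u}) : Prop := x ≤ y ∧ y ≤ x

instance : HasEquiv PGame.{u} := ⟨Equiv⟩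

instance : Zero PGame.{u} := ⟨⟨PEmpty, PEmpty, PEmpty.elim, PEmpty.elim⟩⟩

/-- The pre-game `* = {0|0}`. -/
def star : PGame.{u} := ⟨PUnit, PUnit, fun _ => 0, fun _ => 0⟩

/-- The pre-game with the given lists of left and right options. -/
def ofLists (L R : List PGame.{u}) : PGame.{u} :=
  mk (ULift (Fin L.length)) (ULift (Fin R.length)) (fun i => L.get i.down) fun j => R.get j.down

end PGame

end SetTheory

open SetTheory PGame

inductive Cell | x | o | e
deriving DecidableEq

abbrev Pos := List Cell

/-- All positions reachable by one move of the player with stones `me`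
clobbering an adjacent stone of the opponent `opp`. -/
def movesAux (me opp : Cell) : Pos → List Pos
  | a :: b :: rest =>
      (if a = me ∧ b = opp then [Cell.e :: me :: rest] else []) ++
      (if a = opp ∧ b = me then [me :: Cell.e :: rest] else []) ++
      (movesAux me opp (b :: rest)).map (a :: ·)
  | _ => []

def leftMoves (p : Pos) : List Pos := movesAux Cell.x Cell.o p
def rightMoves (p : Pos) : List Pos := movesAux Cell.o Cell.x p

def stones (p : Pos) : Nat := p.countP (· != Cell.e)

/-- Game value of a clobber position, via fuel recursion (each move removes one stone). -/
def valueFuel : Nat → Pos → PGame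
  | 0, _ => 0
  | n+1, p => PGame.ofLists ((leftMoves p).map (valueFuel n)) ((rightMoves p).map (valueFuel n))

def value (p : Pos) : PGame := valueFuel (stones p) p

lemma leAux_mk {xl xr : Type u} {xL : xl → PGame.{u}} {xR : xr → PGame.{u}}
    {yl yr : Type u} {yL : yl → PGame.{u}} {yR : yr → PGame.{u}} :
    leAux (mk xl xr xL xR) (mk yl yr yL yR) =
      ((∀ i, ¬ (leAux (xL i) (mk yl yr yL yR)).2) ∧ (∀ j, ¬ (leAux (mk xl xr xL xR) (yR j)).2),
       (∀ i, ¬ (leAux (mk xl xr xL xR) (yL i)).1) ∧ (∀ j, ¬ (leAux (xR j) (mk yl yr yL yR)).1)) :=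
  rfl

lemma leAux_snd2 (x y : PGame.{u}) :
    ((leAux x y).2 ↔ (leAux y x).1) ∧ ((leAux x y).1 ↔ (leAux y x).2) := by
  induction x generalizing y with
  | mk xl xr xL xR IHL IHR =>
    induction y with
    | mk yl yr yL yR JL JR =>
      rw [leAux_mk, leAux_mk]
      constructor
      · exact and_congr (forall_congr' fun i => not_congr (JL i).2)
          (forall_congr' fun j => not_congr (IHR j _).2)
      · exact and_congr (forall_congr' fun i => not_congr (IHL i _).1)
          (forall_congr' fun j => not_congr (JR j).1)

lemma leAux_snd (x y : PGame.{u}) : (leAux x y).2 ↔ (leAux y x).1 :=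
  (leAux_snd2 x y).1

lemma le_def' {xl xr : Type u} {xL : xl → PGame.{u}} {xR : xr → PGame.{u}}
    {yl yr : Type u} {yL : yl → PGame.{u}} {yR : yr → PGame.{u}} :
    mk xl xr xL xR ≤ mk yl yr yL yR ↔
      (∀ i, ¬ mk yl yr yL yR ≤ xL i) ∧ (∀ j, ¬ yR j ≤ mk xl xr xL xR) := by
  show (leAux (mk xl xr xL xR) (mk yl yr yL yR)).1 ↔ _
  rw [leAux_mk]
  exact and_congr (forall_congr' fun i => not_congr (leAux_snd _ _))
    (forall_congr' fun j => not_congr (leAux_snd _ _))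

def Emp : PGame.{u} → Prop
  | ⟨l, r, _, _⟩ => IsEmpty l ∧ IsEmpty r

def SL : PGame.{u} → Prop
  | ⟨l, r, L, R⟩ => Nonempty l ∧ Nonempty r ∧ (∀ i, Emp (L i)) ∧ (∀ j, Emp (R j))

lemma emp_le (a b : PGame.{u}) (ha : Emp a) (hb : Emp b) : a ≤ b := by
  cases a with
  | mk al ar aL aR =>
    cases b with
    | mk bl br bL bR =>
      rw [le_def']
      exact ⟨fun i => (ha.1.false i).elim, fun j => (hb.2.false j).elim⟩

lemma sl_le (x y : PGame.{u}) (hx : SL x) (hy : SL y) : x ≤ y := by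
  cases x with
  | mk xl xr xL xR =>
    cases y with
    | mk yl yr yL yR =>
      obtain ⟨_, ⟨j0⟩, hxL, hxR⟩ := hx
      obtain ⟨⟨i0⟩, _, hyL, hyR⟩ := hy
      rw [le_def']
      constructor
      · intro i h
        have ha := hxL i
        generalize xL i = a at h ha
        cases a with
        | mk al ar aL aR =>
          rw [le_def'] at h
          exact h.1 i0 (emp_le _ _ ha (hyL i0))
      · intro j h
        have ha := hyR j
        generalize yR j = a at h ha
        cases a with
        | mk al ar aL aR =>
          rw [le_def'] at h
          exact h.2 j0 (emp_le _ _ (hxR j0) ha)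

lemma sl_equiv (x y : PGame.{u}) (hx : SL x) (hy : SL y) : x ≈ y :=
  ⟨sl_le x y hx hy, sl_le y x hy hx⟩

lemma empZ : Emp (ofLists.{u} [] []) :=
  ⟨⟨fun i => i.down.elim0⟩, ⟨fun i => i.down.elim0⟩⟩

lemma sl_star : SL star.{u} :=
  ⟨⟨PUnit.unit⟩, ⟨PUnit.unit⟩, fun _ => ⟨⟨PEmpty.elim⟩, ⟨PEmpty.elim⟩⟩,
    fun _ => ⟨⟨PEmpty.elim⟩, ⟨PEmpty.elim⟩⟩⟩

lemma sl_oxo : SL (value.{u} [Cell.o, Cell.x, Cell.o]) := by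
  have : value.{u} [Cell.o, Cell.x, Cell.o] =
      ofLists [ofLists [] [], ofLists [] []] [ofLists [] [], ofLists [] []] := rfl
  rw [this]
  refine ⟨⟨⟨0, by simp⟩⟩, ⟨⟨0, by simp⟩⟩, ?_, ?_⟩
  · rintro ⟨i⟩
    fin_cases i <;> exact empZ
  · rintro ⟨i⟩
    fin_cases i <;> exact empZ

lemma sl_ox : SL (value.{u} [Cell.o, Cell.x]) := by
  have : value.{u} [Cell.o, Cell.x] = ofLists [ofLists [] []] [ofLists [] []] := rfl
  rw [this]
  refine ⟨⟨⟨0, by simp⟩⟩, ⟨⟨0, by simp⟩⟩, ?_, ?_⟩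
  · rintro ⟨i⟩
    fin_cases i <;> exact empZ
  · rintro ⟨i⟩
    fin_cases i <;> exact empZ

/-- The clobber position `oxo` is equivalent to `ox`, which is the game `* = {0|0}`. -/
theorem oxo_equiv_ox_star :
    value [Cell.o, Cell.x, Cell.o] ≈ value [Cell.o, Cell.x] ∧
    value [Cell.o, Cell.x] ≈ star := by
  exact ⟨sl_equiv _ _ sl_oxo sl_ox, sl_equiv _ _ sl_ox sl_star⟩
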